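/- Promonoidal left unitor of spliced arrows (Lemma: promonoidal splice left unitor). Let C be a category and A, B, X, Y objects of C. Let Q be the quotient of the type of tuples (U V : C, f₀ : A ⟶ U, f₁ : V ⟶ X, f₂ : Y ⟶ B, g : U ⟶ V) by the equivalence relation generated by: for all u : U ⟶ U', v : V' ⟶ V, f₁' : V' ⟶ X and g' : U' ⟶ V', the tuple (U', V', f₀ ≫ u, f₁', f₂, g') is identified with (U, V, f₀, v ≫ f₁', f₂, u ≫ g' ≫ v). Then the map sending the class of (f₀, f₁, f₂, g) to (f₀ ≫ g ≫ f₁, f₂) is a well-defined bijection from Q to Hom(A,X) × Hom(Y,B). -/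
import Mathlib


/-!
Promonoidal left unitor of spliced arrows.
-/

open CategoryTheory

universe v u

variable {C : Type u} [Category.{v} C]

/-- A representative of a split of spliced arrows whose first hole is filled by
a unit: an outer two-hole splice `(f₀, f₁, f₂)` with first hole `(U,V)` and a
filler `g : U ⟶ V`. -/
structure UnitRep (A B X Y : C) where
  U : C
  V : C
  f₀ : A ⟶ U
  f₁ : V ⟶ X
  f₂ : Y ⟶ B
  g : U ⟶ V

/-- Dinaturality in `(U,V)`. -/
inductive UnitRel (A B X Y : C) : UnitRep A B X Y → UnitRep A B X Y → Prop
  | dinat {U U' V V' : C} (u : U ⟶ U') (v : V' ⟶ V)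
      (f₀ : A ⟶ U) (f₁ : V ⟶ X) (f₂ : Y ⟶ B) (g' : U' ⟶ V') :
      UnitRel A B X Y
        ⟨U', V', f₀ ≫ u, v ≫ f₁, f₂, g'⟩
        ⟨U, V, f₀, f₁, f₂, u ≫ g' ≫ v⟩

/-- The left unitor of the promonoidal category of spliced arrows: filling the
first hole of a two-hole splice by a unit yields, up to dinaturality, exactly a
spliced arrow, via the map `(f₀, f₁, f₂, g) ↦ (f₀ ≫ g ≫ f₁, f₂)`. -/
theorem splice_promonoidal_left_unitor (C : Type u) [Category.{v} C]
    (A B X Y : C) :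
    ∃ e : Quot (UnitRel A B X Y) → (A ⟶ X) × (Y ⟶ B),
      (∀ r : UnitRep A B X Y, e (Quot.mk _ r) = (r.f₀ ≫ r.g ≫ r.f₁, r.f₂)) ∧
      Function.Bijective e := by
  refine ⟨Quot.lift (fun r => (r.f₀ ≫ r.g ≫ r.f₁, r.f₂)) ?_, fun r => rfl, ?_, ?_⟩
  · rintro _ _ ⟨u, v, f₀, f₁, f₂, g'⟩
    simp [Category.assoc]
  · -- injective
    have key : ∀ r : UnitRep A B X Y,
        Quot.mk (UnitRel A B X Y) r =
          Quot.mk _ ⟨A, X, 𝟙 A, 𝟙 X, r.f₂, r.f₀ ≫ r.g ≫ r.f₁⟩ := by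
      rintro ⟨U, V, f₀, f₁, f₂, g⟩
      have h := Quot.sound (UnitRel.dinat f₀ f₁ (𝟙 A) (𝟙 X) f₂ g)
      simpa using h
    rintro ⟨r⟩ ⟨s⟩ h
    rw [key r, key s]
    simp only [Prod.mk.injEq] at h
    rw [h.1, h.2]
  · rintro ⟨h, k⟩
    exact ⟨Quot.mk _ ⟨A, X, 𝟙 A, 𝟙 X, k, h⟩, by simp⟩
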